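/- Let p be a prime and let R be a finite commutative local ring with maximal ideal M whose residue field has characteristic p, with -1 ∈ (R^×)^p. Then the p-unitary Cayley graph G_R(p) is connected if and only if M = pR. Moreover, if p = 2, then G_R(2) is connected if and only if R is a field, in which case G_R(2) is the complete graph on |R| vertices. -/

import Mathlib

/-- The `p`-unitary Cayley graph of a commutative ring `R`: vertices are elements of `R`,
and distinct `a, b` are adjacent iff `a - b` is a `p`-th power of a unit.
(When `-1 ∈ (Rˣ)^p`, the relation is symmetric, so `fromRel` gives exactly this graph.) -/
def pUnitaryCayley (R : Type*) [CommRing R] (p : ℕ) : SimpleGraph R :=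
  SimpleGraph.fromRel (fun a b => ∃ u : Rˣ, a - b = (u : R) ^ p)

namespace PUCAux

variable {R : Type*} [CommRing R] {p : ℕ}

/-- The additive subgroup generated by `p`-th powers of units. -/
def pS (R : Type*) [CommRing R] (p : ℕ) : AddSubgroup R :=
  AddSubgroup.closure {x | ∃ u : Rˣ, x = (u : R) ^ p}

lemma adj_iff {a b : R} :
    (pUnitaryCayley R p).Adj a b ↔
      a ≠ b ∧ ((∃ u : Rˣ, a - b = (u : R) ^ p) ∨ ∃ u : Rˣ, b - a = (u : R) ^ p) := by
  simp [pUnitaryCayley]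

/-- translation is a graph homomorphism -/
def addHom (c : R) : pUnitaryCayley R p →g pUnitaryCayley R p where
  toFun := fun x => x + c
  map_rel' := by
    intro a b h
    rw [adj_iff] at h ⊢
    refine ⟨by simpa using h.1, ?_⟩
    simpa using h.2

/-- negation is a graph homomorphism -/
def negHom : pUnitaryCayley R p →g pUnitaryCayley R p where
  toFun := fun x => -x
  map_rel' := by
    intro a b h
    rw [adj_iff] at h ⊢
    refine ⟨by simpa using h.1, ?_⟩
    rcases h.2 with ⟨u, hu⟩ | ⟨u, hu⟩
    · exact Or.inr ⟨u, by rw [← hu]; ring⟩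
    · exact Or.inl ⟨u, by rw [← hu]; ring⟩

@[simp] lemma addHom_apply (c x : R) : (addHom (p := p) c) x = x + c := rfl

@[simp] lemma negHom_apply (x : R) : (negHom (p := p)) x = -x := rfl

lemma walk_sub_mem : ∀ {a b : R}, (pUnitaryCayley R p).Walk a b → a - b ∈ pS R p := by
  intro a b w
  induction w with
  | nil => simpa using (pS R p).zero_mem
  | @cons a c b h w ih =>
    have h1 : a - c ∈ pS R p := by
      rcases (adj_iff.mp h).2 with ⟨u, hu⟩ | ⟨u, hu⟩
      · exact AddSubgroup.subset_closure ⟨u, hu⟩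
      · have := (pS R p).neg_mem (AddSubgroup.subset_closure ⟨u, hu⟩)
        simpa using this
    have := (pS R p).add_mem h1 ih
    simpa using this

lemma conn_iff [Nontrivial R] :
    (pUnitaryCayley R p).Connected ↔ ∀ x : R, x ∈ pS R p := by
  constructor
  · intro h x
    obtain ⟨w⟩ := h.preconnected x 0
    simpa using walk_sub_mem w
  · intro h
    have key : ∀ x : R, (pUnitaryCayley R p).Reachable 0 x := by
      intro x
      induction h x using AddSubgroup.closure_induction with
      | mem y hy =>
        obtain ⟨u, rfl⟩ := hy
        refine SimpleGraph.Adj.reachable ?_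
        rw [adj_iff]
        have hne : (u : R) ^ p ≠ 0 := by
          intro h0
          have : ((u ^ p : Rˣ) : R) ≠ 0 := Units.ne_zero _
          simp [Units.val_pow_eq_pow_val, h0] at this
        exact ⟨fun h0 => hne h0.symm, Or.inr ⟨u, by ring⟩⟩
      | zero => exact SimpleGraph.Reachable.refl 0
      | add y z hy hz ihy ihz =>
        have h2 : (pUnitaryCayley R p).Reachable y (y + z) := by
          have := ihz.map (addHom y)
          simpa only [addHom_apply, zero_add, add_zero, add_comm] using this
        exact ihy.trans h2
      | neg y hy ihy =>
        have := ihy.map (negHom (R := R) (p := p))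
        simpa only [negHom_apply, neg_zero] using this
    exact SimpleGraph.Connected.mk (fun a b => (key a).symm.trans (key b))

open IsLocalRing in
lemma exists_rep (hp : p.Prime) (hneg : ∃ u : Rˣ, (u : R) ^ p = -1) {x : R}
    (hx : x ∈ pS R p) : ∃ z c : R, x = z ^ p + p * c := by
  induction hx using AddSubgroup.closure_induction with
  | mem y hy => obtain ⟨u, rfl⟩ := hy; exact ⟨u, 0, by ring⟩
  | zero => exact ⟨0, 0, by simp [zero_pow hp.ne_zero]⟩
  | add y z hy hz ihy ihz =>
    obtain ⟨a, c, rfl⟩ := ihy; obtain ⟨b, d, rfl⟩ := ihz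
    obtain ⟨r, hr⟩ := exists_add_pow_prime_eq hp a b
    exact ⟨a + b, c + d - a * b * r, by rw [hr]; ring⟩
  | neg y hy ihy =>
    obtain ⟨a, c, rfl⟩ := ihy
    obtain ⟨v, hv⟩ := hneg
    refine ⟨(v : R) * a, -c, ?_⟩
    rw [mul_pow, hv]; ring

open IsLocalRing in
lemma p_mem_max [IsLocalRing R] (hchar : CharP (IsLocalRing.ResidueField R) p) :
    (p : R) ∈ IsLocalRing.maximalIdeal R := by
  have h : IsLocalRing.residue R (p : R) = 0 := by
    rw [map_natCast]; exact CharP.cast_eq_zero _ p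
  exact Ideal.Quotient.eq_zero_iff_mem.mp h

open IsLocalRing in
lemma max_nilpotent [IsLocalRing R] [Finite R] :
    ∃ n, (IsLocalRing.maximalIdeal R) ^ n = ⊥ := by
  have h : IsArtinianRing R := isArtinian_of_finite
  obtain ⟨n, hn⟩ := IsArtinianRing.isNilpotent_jacobson_bot (R := R)
  rw [IsLocalRing.jacobson_eq_maximalIdeal ⊥ bot_ne_top] at hn
  exact ⟨n, hn⟩

open IsLocalRing in
lemma descend [IsLocalRing R] [Finite R] {I : Ideal R}
    (h2 : maximalIdeal R ≤ maximalIdeal R ^ 2 ⊔ I) : maximalIdeal R ≤ I := by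
  set M := maximalIdeal R with hM
  have step : ∀ k, M ≤ M ^ (k + 1) ⊔ I := by
    intro k
    induction k with
    | zero => exact le_trans (by rw [pow_one]) le_sup_left
    | succ k ih =>
      refine h2.trans (sup_le ?_ le_sup_right)
      have e1 : M ^ 2 = M * M := sq M
      calc M ^ 2 = M * M := sq M
        _ ≤ M * (M ^ (k + 1) ⊔ I) := Ideal.mul_mono_right ih
        _ = M * M ^ (k + 1) ⊔ M * I := Ideal.mul_sup _ _ _
        _ ≤ M ^ (k + 2) ⊔ I :=
          sup_le_sup (le_of_eq (pow_succ' M (k + 1)).symm) Ideal.mul_le_right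
  obtain ⟨n, hn⟩ := max_nilpotent (R := R)
  have h3 := step n
  have h4 : M ^ (n + 1) = ⊥ := by
    rw [pow_succ, hn, Submodule.bot_mul]
  rw [h4, bot_sup_eq] at h3
  exact h3

open IsLocalRing in
lemma max_eq_span (hp : p.Prime) [IsLocalRing R] [Finite R]
    (hchar : CharP (IsLocalRing.ResidueField R) p) (hneg : ∃ u : Rˣ, (u : R) ^ p = -1)
    (hS : ∀ x : R, x ∈ pS R p) :
    maximalIdeal R = Ideal.span {(p : R)} := by
  refine le_antisymm (descend ?_) ?_
  · intro m hm
    obtain ⟨z, c, hz⟩ := exists_rep hp hneg (hS m)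
    have hzM : z ∈ maximalIdeal R := by
      have hpc : (p : R) * c ∈ maximalIdeal R :=
        Ideal.mul_mem_right _ _ (p_mem_max hchar)
      have hzp : z ^ p ∈ maximalIdeal R := by
        have e : z ^ p = m - (p : R) * c := by rw [hz]; ring
        rw [e]; exact Ideal.sub_mem _ hm hpc
      exact Ideal.IsPrime.mem_of_pow_mem (Ideal.IsMaximal.isPrime (maximalIdeal.isMaximal R)) p hzp
    have h1 : z ^ p ∈ maximalIdeal R ^ 2 :=
      Ideal.pow_le_pow_right hp.two_le (Ideal.pow_mem_pow hzM p)
    have h2 : (p : R) * c ∈ Ideal.span {(p : R)} :=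
      Ideal.mul_mem_right _ _ (Ideal.mem_span_singleton_self _)
    rw [hz]
    exact Ideal.add_mem _ (Ideal.mem_sup_left h1) (Ideal.mem_sup_right h2)
  · rw [Ideal.span_le, Set.singleton_subset_iff]
    exact p_mem_max hchar

open IsLocalRing in
lemma approx (hp : p.Prime) [IsLocalRing R] [Finite R]
    (hchar : CharP (IsLocalRing.ResidueField R) p) (x : R) :
    ∃ s ∈ pS R p, x - s ∈ maximalIdeal R := by
  by_cases hx : IsUnit x
  · haveI : Fact p.Prime := ⟨hp⟩
    haveI : Finite (ResidueField R) := Finite.of_surjective _ residue_surjective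
    have hinj : Function.Injective (frobenius (ResidueField R) p) := frobenius_inj _ p
    have hsurj := Finite.injective_iff_surjective.mp hinj
    obtain ⟨z, hz⟩ := hsurj (residue R x)
    rw [frobenius_def] at hz
    obtain ⟨y, hy⟩ := residue_surjective (R := R) z
    have hyu : IsUnit y := by
      by_contra hyn
      have hyM : y ∈ maximalIdeal R := hyn
      have hz0 : z = 0 := by rw [← hy]; exact Ideal.Quotient.eq_zero_iff_mem.mpr hyM
      have h0 : residue R x = 0 := by rw [← hz, hz0, zero_pow hp.ne_zero]
      have hxM : x ∈ maximalIdeal R := Ideal.Quotient.eq_zero_iff_mem.mp h0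
      exact hxM hx
    obtain ⟨u, hu⟩ := hyu
    refine ⟨(u : R) ^ p, AddSubgroup.subset_closure ⟨u, rfl⟩, ?_⟩
    refine Ideal.Quotient.eq_zero_iff_mem.mp ?_
    show residue R (x - (u : R) ^ p) = 0
    rw [map_sub, map_pow, hu, hy, hz, sub_self]
  · refine ⟨0, (pS R p).zero_mem, ?_⟩
    simpa using hx

open IsLocalRing in
lemma mem_pS_of (hp : p.Prime) [IsLocalRing R] [Finite R]
    (hchar : CharP (IsLocalRing.ResidueField R) p)
    (hM : maximalIdeal R = Ideal.span {(p : R)}) : ∀ x : R, x ∈ pS R p := by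
  obtain ⟨n, hn⟩ := max_nilpotent (R := R)
  have key : ∀ (k : ℕ) (x : R), ∃ s ∈ pS R p, x - s ∈ Ideal.span {(p : R)} ^ k := by
    intro k
    induction k with
    | zero => exact fun x => ⟨0, (pS R p).zero_mem, by simp⟩
    | succ k ih =>
      intro x
      obtain ⟨s, hs, hxs⟩ := ih x
      rw [Ideal.span_singleton_pow, Ideal.mem_span_singleton] at hxs
      obtain ⟨y, hy⟩ := hxs
      obtain ⟨s', hs', hys'⟩ := approx hp hchar y
      rw [hM, Ideal.mem_span_singleton] at hys'
      obtain ⟨t, ht⟩ := hys'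
      refine ⟨s + (p ^ k : ℕ) • s',
        (pS R p).add_mem hs (AddSubgroup.nsmul_mem _ hs' _), ?_⟩
      rw [Ideal.span_singleton_pow, Ideal.mem_span_singleton]
      refine ⟨t, ?_⟩
      have e1 : (p ^ k : ℕ) • s' = (p : R) ^ k * s' := by
        rw [nsmul_eq_mul]; push_cast; ring
      have e2 : x - (s + (p ^ k : ℕ) • s') = (p : R) ^ k * (y - s') := by
        rw [e1]; linear_combination hy
      rw [e2, ht]; ring
  intro x
  obtain ⟨s, hs, hx0⟩ := key n x
  have hle : Ideal.span {(p : R)} ^ n ≤ ⊥ := by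
    rw [← hn]
    refine Ideal.pow_right_mono ?_ n
    rw [Ideal.span_le, Set.singleton_subset_iff]
    exact p_mem_max hchar
  have hxs : x - s = 0 := by simpa using hle hx0
  have hxe : x = s := sub_eq_zero.mp hxs
  exact hxe ▸ hs

end PUCAux

theorem stmt_10 (p : ℕ) (hp : p.Prime) (R : Type*) [CommRing R] [IsLocalRing R] [Fintype R]
    (hchar : CharP (IsLocalRing.ResidueField R) p)
    (hneg : ∃ u : Rˣ, (u : R) ^ p = -1) :
    ((pUnitaryCayley R p).Connected ↔
        IsLocalRing.maximalIdeal R = Ideal.span {(p : R)}) ∧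
      (p = 2 →
        ((pUnitaryCayley R p).Connected ↔ IsField R) ∧
          ((pUnitaryCayley R p).Connected → pUnitaryCayley R p = ⊤)) := by
  haveI : Finite R := Finite.of_fintype R
  have main : (pUnitaryCayley R p).Connected ↔
      IsLocalRing.maximalIdeal R = Ideal.span {(p : R)} := by
    rw [PUCAux.conn_iff]
    exact ⟨fun h => PUCAux.max_eq_span hp hchar hneg h,
      fun h => PUCAux.mem_pS_of hp hchar h⟩
  refine ⟨main, ?_⟩
  rintro rfl
  have h2R : ((2 : ℕ) : R) ∈ IsLocalRing.maximalIdeal R := PUCAux.p_mem_max hchar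
  have h20k : ((2 : ℕ) : IsLocalRing.ResidueField R) = 0 := CharP.cast_eq_zero _ 2
  have hfield : (pUnitaryCayley R 2).Connected → IsField R := by
    intro hc
    have hM := main.mp hc
    obtain ⟨u, hu⟩ := hneg
    have hm : (u : R) - 1 ∈ IsLocalRing.maximalIdeal R := by
      refine Ideal.Quotient.eq_zero_iff_mem.mp ?_
      show IsLocalRing.residue R ((u : R) - 1) = 0
      have h1 : (IsLocalRing.residue R (u : R)) ^ 2 = 1 := by
        rw [← map_pow, hu, map_neg, map_one]
        push_cast at h20k
        linear_combination -h20k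
      have hsq : (IsLocalRing.residue R (u : R) - 1) ^ 2 = 0 := by
        push_cast at h20k
        linear_combination h1 + (1 - IsLocalRing.residue R (u : R)) * h20k
      have := pow_eq_zero_iff (by norm_num : (2 : ℕ) ≠ 0) |>.mp hsq
      rw [map_sub, map_one]
      simpa using this
    have key2 : ((2 : ℕ) : R) ∈ (IsLocalRing.maximalIdeal R) ^ 2 := by
      have he : ((u : R) - 1) * ((u : R) - 1) * (-(↑u⁻¹ : R)) = ((2 : ℕ) : R) := by
        push_cast
        linear_combination (-(↑u⁻¹ : R)) * hu + 2 * u.mul_inv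
      rw [← he]
      have hmm : ((u : R) - 1) * ((u : R) - 1) ∈ (IsLocalRing.maximalIdeal R) ^ 2 := by
        rw [pow_two]; exact Ideal.mul_mem_mul hm hm
      exact Ideal.mul_mem_right _ _ hmm
    have hle : IsLocalRing.maximalIdeal R ≤ IsLocalRing.maximalIdeal R ^ 2 ⊔ (⊥ : Ideal R) := by
      rw [sup_bot_eq]
      calc IsLocalRing.maximalIdeal R = Ideal.span {((2 : ℕ) : R)} := hM
        _ ≤ IsLocalRing.maximalIdeal R ^ 2 := by
            rw [Ideal.span_le, Set.singleton_subset_iff]; exact key2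
    have hbot := PUCAux.descend hle
    exact IsLocalRing.isField_iff_maximalIdeal_eq.mpr (le_bot_iff.mp hbot)
  have hMbot_of : IsField R → IsLocalRing.maximalIdeal R = ⊥ :=
    fun hF => IsLocalRing.isField_iff_maximalIdeal_eq.mp hF
  have hfield' : IsField R → (pUnitaryCayley R 2).Connected := by
    intro hF
    rw [main]
    have hMbot := hMbot_of hF
    have h20 : ((2 : ℕ) : R) = 0 := by
      have := h2R; rw [hMbot] at this; simpa using this
    rw [hMbot, h20]
    exact (Ideal.span_singleton_eq_bot.mpr rfl).symm
  refine ⟨⟨hfield, hfield'⟩, ?_⟩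
  intro hc
  have hF := hfield hc
  letI := hF.toField
  have hMbot := hMbot_of hF
  have h20 : ((2 : ℕ) : R) = 0 := by
    have := h2R; rw [hMbot] at this; simpa using this
  have h2' : (2 : R) = 0 := by push_cast at h20; exact h20
  have hinj : Function.Injective (fun c : R => c ^ 2) := by
    intro a b hab
    try simp only at hab
    have hz : (a - b) ^ 2 = 0 := by
      linear_combination hab + (b * b - a * b) * h2'
    exact sub_eq_zero.mp (pow_eq_zero_iff (by norm_num : (2 : ℕ) ≠ 0) |>.mp hz)
  have hsurj := Finite.injective_iff_surjective.mp hinj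
  ext a b
  simp only [SimpleGraph.top_adj]
  constructor
  · exact fun h => (PUCAux.adj_iff.mp h).1
  · intro hab
    obtain ⟨c, hc2⟩ := hsurj (a - b)
    try simp only at hc2
    have hc0 : c ≠ 0 := by
      rintro rfl
      rw [zero_pow (by norm_num : (2:ℕ) ≠ 0)] at hc2
      exact hab (sub_eq_zero.mp hc2.symm)
    obtain ⟨u, hu⟩ := hc0.isUnit
    rw [PUCAux.adj_iff]
    exact ⟨hab, Or.inl ⟨u, by rw [hu]; exact hc2.symm⟩⟩
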